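/- Fix 0 ≤ α < 1 and θ ≥ 0 with θ + α > 0. For every composition λ = (λ_1,...,λ_k) of n with k ≥ 2, the product p_{α,θ}(λ) · d_{α,θ}(λ;1) equals q(n,λ_1) · binomial(n,λ_1)^{-1} · p_{α,θ}(λ_2,...,λ_k), where q(n,m) = binomial(n,m) · (1-α)_{m-1}/(θ+n-m)_m · ((n-m)α + mθ)/n. -/

import Mathlib

/-- Rising factorial `(x)_n = x (x+1) ⋯ (x+n-1)`. -/
noncomputable def risingFac (x : ℝ) (n : ℕ) : ℝ := ∏ i ∈ Finset.range n, (x + i)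

/-- The two-parameter EPPF `p_{α,θ}` on compositions with `k` parts. -/
noncomputable def eppf (α θ : ℝ) {k : ℕ} (lam : Fin k → ℕ) : ℝ :=
  (∏ i ∈ Finset.range (k - 1), (θ + (i + 1) * α)) /
      risingFac (θ + 1) ((∑ j, lam j) - 1) *
    ∏ j, risingFac (1 - α) (lam j - 1)

/-- The deletion kernel `d_{α,θ}(λ;j) = (θλ_j + α(n-λ_j))/(n(θ+α(k-1)))`. -/
noncomputable def delKernel (α θ : ℝ) {k : ℕ} (lam : Fin k → ℕ) (j : Fin k) : ℝ :=
  (θ * lam j + α * (((∑ i, lam i : ℕ) : ℝ) - (lam j : ℕ))) /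
    (((∑ i, lam i : ℕ) : ℝ) * (θ + α * ((k : ℝ) - 1)))

/-- The decrement probability
`q(n,m) = C(n,m) (1-α)_{m-1}/(θ+n-m)_m · ((n-m)α + mθ)/n`. -/
noncomputable def qdec (α θ : ℝ) (n m : ℕ) : ℝ :=
  (n.choose m : ℝ) * (risingFac (1 - α) (m - 1) / risingFac (θ + (n : ℝ) - m) m) *
    ((((n : ℝ) - m) * α + m * θ) / n)

lemma risingFac_add (x : ℝ) (a b : ℕ) :
    risingFac x (a + b) = risingFac x a * risingFac (x + a) b := by
  unfold risingFac
  rw [Finset.prod_range_add]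
  congr 1
  exact Finset.prod_congr rfl fun i _ => by push_cast; ring

lemma risingFac_pos {x : ℝ} (hx : 0 < x) (n : ℕ) : 0 < risingFac x n := by
  unfold risingFac
  exact Finset.prod_pos fun i _ => by positivity

set_option maxHeartbeats 1000000 in
/-- The `(α,θ)` EPPF is regenerative with respect to the kernel `d_{α,θ}`:
`p_{α,θ}(λ) d_{α,θ}(λ;1) = q(n,λ_1) C(n,λ_1)⁻¹ p_{α,θ}(λ_2,…,λ_k)` for any
composition `λ` with at least two parts. -/
theorem eppf_regenerative (α θ : ℝ) (hα0 : 0 ≤ α) (hα1 : α < 1) (hθ0 : 0 ≤ θ)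
    (hθα : 0 < θ + α) (k : ℕ) (lam : Fin (k + 2) → ℕ) (hpos : ∀ j, 0 < lam j) :
    eppf α θ lam * delKernel α θ lam 0 =
      qdec α θ (∑ j, lam j) (lam 0) *
        ((((∑ j, lam j : ℕ)).choose (lam 0) : ℝ))⁻¹ *
        eppf α θ (Fin.tail lam) := by
  set m := lam 0 with hm
  set t := ∑ j, Fin.tail lam j with ht
  have hsum : ∑ j, lam j = m + t := by
    rw [Fin.sum_univ_succ]; rfl
  have hm1 : 1 ≤ m := hpos 0
  have ht1 : 1 ≤ t := by
    have : 0 < t := by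
      apply Finset.sum_pos (fun j _ => hpos _)
      exact ⟨0, Finset.mem_univ _⟩
    omega
  have hsplit : risingFac (θ + 1) ((m + t) - 1)
      = risingFac (θ + 1) (t - 1) * risingFac (θ + 1 + (t - 1 : ℕ)) m := by
    rw [show (m + t) - 1 = (t - 1) + m by omega, risingFac_add]
  have hcast : (θ + 1 + ((t - 1 : ℕ) : ℝ)) = θ + (t : ℝ) := by
    push_cast [Nat.cast_sub ht1]; ring
  have hprod : ∏ j, risingFac (1 - α) (lam j - 1)
      = risingFac (1 - α) (m - 1) * ∏ j, risingFac (1 - α) (Fin.tail lam j - 1) := by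
    rw [Fin.prod_univ_succ]; rfl
  have hrange : ∏ i ∈ Finset.range (k + 2 - 1), (θ + (i + 1) * α)
      = (∏ i ∈ Finset.range (k + 1 - 1), (θ + (i + 1) * α)) * (θ + (k + 1) * α) := by
    rw [show k + 2 - 1 = (k + 1 - 1) + 1 by omega, Finset.prod_range_succ]
    norm_num
  have hn0 : ((m + t : ℕ) : ℝ) ≠ 0 := by positivity
  have hR1 : risingFac (θ + 1) (t - 1) ≠ 0 :=
    ne_of_gt (risingFac_pos (by linarith) _)
  have hx : (0:ℝ) < θ + 1 + ((t - 1 : ℕ) : ℝ) := by positivity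
  have hR2 : risingFac (θ + (t : ℝ)) m ≠ 0 := by
    rw [← hcast]; exact ne_of_gt (risingFac_pos hx _)
  have hden : θ + α * (((k + 2 : ℕ) : ℝ) - 1) ≠ 0 := by
    have : (0:ℝ) ≤ α * k := by positivity
    push_cast; nlinarith
  have hC : ((m + t).choose m : ℝ) ≠ 0 := by
    exact Nat.cast_ne_zero.mpr (Nat.choose_pos (by omega)).ne'
  unfold eppf delKernel qdec
  rw [hsum, show (∑ j, Fin.tail lam j) = t from rfl, hprod, hrange, hsplit, hcast,
    show (θ + ((m + t : ℕ) : ℝ) - (m : ℕ)) = θ + (t : ℝ) by push_cast; ring,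
    show lam 0 = m from rfl]
  field_simp
  rw [Finset.prod_congr rfl fun (x : ℕ) _ => (by ring : θ + α * ((x : ℝ) + 1) = θ + ((x : ℝ) + 1) * α)]
  push_cast
  ring
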